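/- Let V be a real vector space of dimension 2n with n ≥ 2, and let ω be a nondegenerate alternating bilinear form on V. If ξ is a linear functional on V (an alternating 1-form) with ξ ∧ ω = 0, then ξ = 0. -/
import Mathlib


/-- The wedge product of an alternating `m`-form and an alternating `n`-form on a real
vector space `V`, producing an alternating `(m + n)`-form (defined, up to the usual
normalization constant, via `AlternatingMap.domCoprod`). -/
noncomputable def altWedge {V : Type*} [AddCommGroup V] [Module ℝ V] {m n : ℕ}
    (f : V [⋀^Fin m]→ₗ[ℝ] ℝ) (g : V [⋀^Fin n]→ₗ[ℝ] ℝ) : V [⋀^Fin (m + n)]→ₗ[ℝ] ℝ :=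
  (TensorProduct.lid ℝ ℝ).toLinearMap.compAlternatingMap
    ((f.domCoprod g).domDomCongr finSumFinEquiv)

section Aux
variable {V : Type*} [AddCommGroup V] [Module ℝ V]

set_option maxHeartbeats 1000000 in
set_option synthInstance.maxHeartbeats 400000 in
lemma altWedge_apply (ξ : V [⋀^Fin 1]→ₗ[ℝ] ℝ) (ω : V [⋀^Fin 2]→ₗ[ℝ] ℝ) (x y z : V) :
    (2:ℝ) * altWedge ξ ω ![x, y, z] =
      2 * (ξ ![x] * ω ![y, z] - ξ ![y] * ω ![x, z] + ξ ![z] * ω ![x, y]) := by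
  have hswap : ∀ a b : V, ω ![b, a] = - ω ![a, b] := by
    intro a b
    have h1 := ω.map_swap (v := ![a, b]) (i := (0 : Fin 2)) (j := 1) (by decide)
    have h2 : ![a, b] ∘ Equiv.swap (0 : Fin 2) 1 = ![b, a] := by
      funext i; fin_cases i <;> simp
    rwa [h2] at h1
  have halt := MultilinearMap.domCoprod_alternization_eq ξ ω
  set v : Fin 1 ⊕ Fin 2 → V := ![x,y,z] ∘ (finSumFinEquiv (m := 1) (n := 2)) with hv
  have key : ((MultilinearMap.alternatization (MultilinearMap.domCoprod ξ ω)) v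
        : TensorProduct ℝ ℝ ℝ)
      = (2:ℕ) • ((ξ.domCoprod ω) v : TensorProduct ℝ ℝ ℝ) := by
    rw [halt]; norm_num
  rw [MultilinearMap.alternatization_apply] at key
  have huniv : (Finset.univ : Finset (Equiv.Perm (Fin 1 ⊕ Fin 2))) =
    {1, Equiv.swap (.inl 0) (.inr 0), Equiv.swap (.inl 0) (.inr 1),
     Equiv.swap (.inr 0) (.inr 1),
     Equiv.swap (.inl 0) (.inr 0) * Equiv.swap (.inr 0) (.inr 1),
     Equiv.swap (.inl 0) (.inr 1) * Equiv.swap (.inr 0) (.inr 1)} := by decide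
  rw [huniv] at key
  rw [Finset.sum_insert (by decide), Finset.sum_insert (by decide),
      Finset.sum_insert (by decide), Finset.sum_insert (by decide),
      Finset.sum_insert (by decide), Finset.sum_singleton] at key
  have tgen : ∀ σ : Equiv.Perm (Fin 1 ⊕ Fin 2),
      (MultilinearMap.domDomCongr σ
        ((ξ : MultilinearMap ℝ (fun _ : Fin 1 => V) ℝ).domCoprod
         (ω : MultilinearMap ℝ (fun _ : Fin 2 => V) ℝ))) v
        = ξ ![v (σ (.inl 0))] ⊗ₜ[ℝ] ω ![v (σ (.inr 0)), v (σ (.inr 1))] := by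
    intro σ
    rw [MultilinearMap.domDomCongr_apply, MultilinearMap.domCoprod_apply]
    congr 1
    · exact congrArg _ (by funext i; fin_cases i; rfl)
    · exact congrArg _ (by funext i; fin_cases i <;> rfl)
  simp only [tgen] at key
  have e1 : v (Sum.inl 0) = x := rfl
  have e2 : v (Sum.inr 0) = y := rfl
  have e3 : v (Sum.inr 1) = z := rfl
  simp [Equiv.Perm.one_apply, Equiv.Perm.mul_apply, Equiv.swap_apply_def,
    e1, e2, e3] at key
  have hrepr : altWedge ξ ω ![x, y, z] = TensorProduct.lid ℝ ℝ ((ξ.domCoprod ω) v) := rfl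
  have hsum : ((ξ.domCoprod ω) v : TensorProduct ℝ ℝ ℝ)
      = ∑ c : Equiv.Perm.ModSumCongr (Fin 1) (Fin 2),
          (AlternatingMap.domCoprod.summand ξ ω c) v := by
    rw [show ((ξ.domCoprod ω) v : TensorProduct ℝ ℝ ℝ)
        = (∑ σ : Equiv.Perm.ModSumCongr (Fin 1) (Fin 2),
            AlternatingMap.domCoprod.summand ξ ω σ) v from rfl,
      MultilinearMap.sum_apply]
  have key2 := congrArg (TensorProduct.lid ℝ ℝ) key
  simp only [map_add, map_neg, TensorProduct.lid_tmul, smul_eq_mul] at key2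
  have h2 : (TensorProduct.lid ℝ ℝ)
        (2 * ∑ c : Equiv.Perm.ModSumCongr (Fin 1) (Fin 2),
          (AlternatingMap.domCoprod.summand ξ ω c) v)
      = 2 * (TensorProduct.lid ℝ ℝ)
          (∑ c : Equiv.Perm.ModSumCongr (Fin 1) (Fin 2),
            (AlternatingMap.domCoprod.summand ξ ω c) v) := by
    rw [two_mul, map_add, ← two_mul]
  rw [h2] at key2
  rw [hrepr, hsum, ← key2, hswap y x, hswap z y, hswap x z]
  ring
end Aux

/-- If `V` is a real vector space of dimension `2 n` with `n ≥ 2` and `ω` is a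
nondegenerate alternating bilinear form on `V`, then for any linear functional on `V`,
viewed as an alternating 1-form `ξ`, we have: `ξ ∧ ω = 0` implies `ξ = 0`. -/
theorem wedge_with_nondeg_two_form_injective_on_one_forms
    {V : Type*} [AddCommGroup V] [Module ℝ V] [FiniteDimensional ℝ V]
    (n : ℕ) (hn : 2 ≤ n) (hdim : Module.finrank ℝ V = 2 * n)
    (ω : V [⋀^Fin 2]→ₗ[ℝ] ℝ)
    (hω : ∀ v : V, v ≠ 0 → ∃ w : V, ω ![v, w] ≠ 0)
    (ξ : V [⋀^Fin 1]→ₗ[ℝ] ℝ)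
    (h : altWedge ξ ω = 0) : ξ = 0 := by
  -- the fundamental pointwise identity
  have key : ∀ x y z : V,
      ξ ![x] * ω ![y, z] - ξ ![y] * ω ![x, z] + ξ ![z] * ω ![x, y] = 0 := by
    intro x y z
    have := altWedge_apply ξ ω x y z
    rw [h] at this
    simp at this
    linarith [this]
  have upd1 : ∀ (c d : V), Function.update ![c] 0 d = ![d] := by
    intro c d; funext i; fin_cases i; simp
  have upd2 : ∀ (u c d : V), Function.update ![u, c] 1 d = ![u, d] := by
    intro u c d; funext i; fin_cases i <;> simp
  -- ξ as a linear functional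
  set φ : V →ₗ[ℝ] ℝ :=
    { toFun := fun u => ξ ![u]
      map_add' := fun a b => by
        show ξ ![a + b] = ξ ![a] + ξ ![b]
        rw [← upd1 a (a + b), ξ.map_update_add, upd1, upd1]
      map_smul' := fun c a => by
        show ξ ![c • a] = c • ξ ![a]
        rw [← upd1 a (c • a), ξ.map_update_smul, upd1] } with hφ
  by_contra hne
  obtain ⟨f, hf⟩ : ∃ f : Fin 1 → V, ξ f ≠ 0 := by
    by_contra hc
    push_neg at hc
    exact hne (AlternatingMap.ext hc)
  set u : V := f 0 with hu
  have hfu : f = ![u] := by funext i; fin_cases i; rfl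
  have hφu : φ u ≠ 0 := by rw [hφ]; simpa [← hfu] using hf
  -- ω(u, ·) as a linear functional
  set ψ : V →ₗ[ℝ] ℝ :=
    { toFun := fun w => ω ![u, w]
      map_add' := fun a b => by
        show ω ![u, a + b] = ω ![u, a] + ω ![u, b]
        rw [← upd2 u a (a + b), ω.map_update_add, upd2, upd2]
      map_smul' := fun c a => by
        show ω ![u, c • a] = c • ω ![u, a]
        rw [← upd2 u a (c • a), ω.map_update_smul, upd2] } with hψ
  -- the two kernels intersect trivially
  have hker : LinearMap.ker φ ⊓ LinearMap.ker ψ = ⊥ := by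
    rw [Submodule.eq_bot_iff]
    rintro w ⟨hw1, hw2⟩
    by_contra hwne
    obtain ⟨t, ht⟩ := hω w hwne
    have hk := key u w t
    have hφw : ξ ![w] = 0 := hw1
    have hψw : ω ![u, w] = 0 := hw2
    have hzero : ξ ![u] * ω ![w, t] = 0 := by
      rw [hφw, hψw] at hk
      linarith [hk]
    rcases mul_eq_zero.mp hzero with h' | h'
    · exact hφu h'
    · exact ht h'
  -- dimension count
  have d1 : Module.finrank ℝ V ≤ Module.finrank ℝ (LinearMap.ker φ) + 1 := by
    have := LinearMap.finrank_range_add_finrank_ker φ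
    have hr : Module.finrank ℝ (LinearMap.range φ) ≤ 1 := by
      simpa using Submodule.finrank_le (LinearMap.range φ)
    omega
  have d2 : Module.finrank ℝ V ≤ Module.finrank ℝ (LinearMap.ker ψ) + 1 := by
    have := LinearMap.finrank_range_add_finrank_ker ψ
    have hr : Module.finrank ℝ (LinearMap.range ψ) ≤ 1 := by
      simpa using Submodule.finrank_le (LinearMap.range ψ)
    omega
  have dsum := Submodule.finrank_sup_add_finrank_inf_eq
    (LinearMap.ker φ) (LinearMap.ker ψ)
  have dsup : Module.finrank ℝ ↥(LinearMap.ker φ ⊔ LinearMap.ker ψ) ≤ Module.finrank ℝ V :=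
    Submodule.finrank_le _
  have dbot : Module.finrank ℝ ↥(LinearMap.ker φ ⊓ LinearMap.ker ψ) = 0 := by
    rw [hker]; simp
  omega
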